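/- For ordinals α, β, γ with ℓ(α) < β: if α < γ and β ≤ ℓ(γ), then α + ω^β ≤ γ. Consequently, in the Ignatiev semilattice, the meet of α and β at coordinate i equals max(αᵢ,βᵢ) + ω^{δ_{i+1}} whenever ℓ(max(αᵢ,βᵢ)) < δ_{i+1}, where δ is the meet sequence computed by downward recursion. -/

import Mathlib

open Ordinal

/-- `ell β` is the exponent of the last (smallest) term of the Cantor normal
form of `β` (base ω), with `ell 0 = 0`. -/
noncomputable def ell (b : Ordinal) : Ordinal :=
  ((Ordinal.CNF omega0 b).map Prod.fst).getLastD 0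

/-- `ε₀`, the least ordinal `α` with `ω ^ α = α`. -/
noncomputable def eps0 : Ordinal := Ordinal.nfp (fun a => omega0 ^ a) 0

/-- Membership in the Ignatiev set `I`: sequences of ordinals below `ε₀` with
`α (i+1) ≤ ℓ (α i)` for all `i`. -/
def IgMem (a : ℕ → Ordinal) : Prop :=
  (∀ i, a i < eps0) ∧ ∀ i, a (i + 1) ≤ ell (a i)

lemma ell_zero : ell 0 = 0 := by simp [ell, Ordinal.CNF.zero_right]

lemma CNF_omega0_ne_nil {y : Ordinal} (hy : y ≠ 0) : Ordinal.CNF omega0 y ≠ [] := by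
  rw [Ordinal.CNF.ne_zero hy]; exact List.cons_ne_nil _ _

lemma getLastD_of_ne_nil {α : Type*} {l : List α} (h : l ≠ []) (d₁ d₂ : α) :
    l.getLastD d₁ = l.getLastD d₂ := by
  rw [List.getLastD_eq_getLast?, List.getLastD_eq_getLast?,
    List.getLast?_eq_getLast h]
  rfl

lemma ell_rec {y : Ordinal} (hy : y ≠ 0) :
    ell y = if y % omega0 ^ Ordinal.log omega0 y = 0 then Ordinal.log omega0 y
      else ell (y % omega0 ^ Ordinal.log omega0 y) := by
  unfold ell
  rw [Ordinal.CNF.ne_zero hy]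
  split_ifs with h
  · rw [h, Ordinal.CNF.zero_right]; simp
  · have hne : (Ordinal.CNF omega0 (y % omega0 ^ Ordinal.log omega0 y)).map Prod.fst ≠ [] := by
      simp [CNF_omega0_ne_nil h]
    rw [List.map_cons, List.getLastD_cons]
    exact getLastD_of_ne_nil hne _ _

lemma ell_le_log (y : Ordinal) : ell y ≤ Ordinal.log omega0 y := by
  induction y using Ordinal.induction with
  | h y IH =>
    rcases eq_or_ne y 0 with rfl | hy
    · simp [ell_zero]
    · rw [ell_rec hy]
      split_ifs with h
      · exact le_rfl
      · have hrlt : y % omega0 ^ Ordinal.log omega0 y < y :=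
          (Ordinal.mod_lt _ (Ordinal.opow_ne_zero _ omega0_ne_zero)).trans_le
            (Ordinal.opow_log_le_self _ hy)
        exact (IH _ hrlt).trans (Ordinal.log_mono_right _ hrlt.le)

lemma opow_dvd_iff_le_ell {y : Ordinal} (hy : y ≠ 0) (e : Ordinal) :
    omega0 ^ e ∣ y ↔ e ≤ ell y := by
  induction y using Ordinal.induction with
  | h y IH =>
    have hyeq : omega0 ^ Ordinal.log omega0 y * (y / omega0 ^ Ordinal.log omega0 y)
        + y % omega0 ^ Ordinal.log omega0 y = y := Ordinal.div_add_mod y _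
    have hrlt : y % omega0 ^ Ordinal.log omega0 y < omega0 ^ Ordinal.log omega0 y :=
      Ordinal.mod_lt _ (Ordinal.opow_ne_zero _ omega0_ne_zero)
    have hry : y % omega0 ^ Ordinal.log omega0 y < y :=
      hrlt.trans_le (Ordinal.opow_log_le_self _ hy)
    rw [ell_rec hy]
    constructor
    · intro hdvd
      have heL : e ≤ Ordinal.log omega0 y := by
        have h1 : omega0 ^ e ≤ y := Ordinal.le_of_dvd hy hdvd
        have h2 : y < omega0 ^ Order.succ (Ordinal.log omega0 y) :=
          Ordinal.lt_opow_succ_log_self one_lt_omega0 y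
        exact Order.lt_succ_iff.1
          ((Ordinal.opow_lt_opow_iff_right one_lt_omega0).1 (h1.trans_lt h2))
      split_ifs with h
      · exact heL
      · have hdvd1 : omega0 ^ e ∣ omega0 ^ Ordinal.log omega0 y
            * (y / omega0 ^ Ordinal.log omega0 y) :=
          (Ordinal.opow_dvd_opow _ heL).mul_right _
        obtain ⟨s, hs⟩ := hdvd
        obtain ⟨t, ht⟩ := hdvd1
        have hts : t ≤ s := by
          rw [← mul_le_mul_iff_of_pos_left (Ordinal.opow_pos e omega0_pos), ← hs, ← ht,
]
          exact (le_self_add (b := y % omega0 ^ Ordinal.log omega0 y)).trans hyeq.le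
        have hsum : omega0 ^ e * t + omega0 ^ e * (s - t) = omega0 ^ e * s := by
          rw [← mul_add, Ordinal.add_sub_cancel_of_le hts]
        have hdr : omega0 ^ e ∣ y % omega0 ^ Ordinal.log omega0 y := by
          refine ⟨s - t, ?_⟩
          calc y % omega0 ^ Ordinal.log omega0 y
              = y - omega0 ^ Ordinal.log omega0 y * (y / omega0 ^ Ordinal.log omega0 y) :=
                (Ordinal.sub_eq_of_add_eq hyeq).symm
            _ = omega0 ^ e * s - omega0 ^ e * t := by rw [← hs, ← ht]
            _ = omega0 ^ e * (s - t) := Ordinal.sub_eq_of_add_eq hsum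
        exact (IH _ hry h).1 hdr
    · intro he
      split_ifs at he with h
      · rw [h, add_zero] at hyeq
        exact (Ordinal.opow_dvd_opow _ he).trans ⟨_, hyeq.symm⟩
      · have hdr : omega0 ^ e ∣ y % omega0 ^ Ordinal.log omega0 y := (IH _ hry h).2 he
        have heL : e ≤ Ordinal.log omega0 y := by
          calc e ≤ ell (y % omega0 ^ Ordinal.log omega0 y) := he
            _ ≤ Ordinal.log omega0 (y % omega0 ^ Ordinal.log omega0 y) := ell_le_log _
            _ ≤ Ordinal.log omega0 y := Ordinal.log_mono_right _ hry.le
        obtain ⟨t, ht⟩ := (Ordinal.opow_dvd_opow omega0 heL).mul_right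
          (y / omega0 ^ Ordinal.log omega0 y)
        obtain ⟨u, hu⟩ := hdr
        exact ⟨t + u, by rw [mul_add, ← ht, ← hu, hyeq]⟩

lemma add_opow_eq_mul (x b : Ordinal) :
    x + omega0 ^ b = omega0 ^ b * (x / omega0 ^ b + 1) := by
  have hmod : x % omega0 ^ b < omega0 ^ b :=
    Ordinal.mod_lt _ (Ordinal.opow_ne_zero _ omega0_ne_zero)
  conv_lhs => rw [← Ordinal.div_add_mod x (omega0 ^ b)]
  rw [add_assoc, Ordinal.add_omega0_opow hmod, mul_add, mul_one]

lemma add_opow_le {a g b : Ordinal} (hag : a < g) (hdvd : omega0 ^ b ∣ g) :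
    a + omega0 ^ b ≤ g := by
  obtain ⟨q, hq⟩ := hdvd
  have hpq : a / omega0 ^ b < q := by
    rw [← mul_lt_mul_iff_of_pos_left (Ordinal.opow_pos b omega0_pos), ← hq]
    calc omega0 ^ b * (a / omega0 ^ b) ≤ a := by
          conv_rhs => rw [← Ordinal.div_add_mod a (omega0 ^ b)]
          exact le_self_add
      _ < g := hag
  rw [add_opow_eq_mul, hq]
  exact mul_le_mul_right (Order.add_one_le_iff.2 hpq) _

lemma claim1 {a g b : Ordinal} (hag : a < g) (hb : b ≤ ell g) : a + omega0 ^ b ≤ g := by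
  have hg : g ≠ 0 := ((zero_le : (0 : Ordinal) ≤ a).trans_lt hag).ne'
  exact add_opow_le hag ((opow_dvd_iff_le_ell hg b).2 hb)

lemma ell_add_opow (x b : Ordinal) : ell (x + omega0 ^ b) = b := by
  have hw : omega0 ^ b ≠ 0 := Ordinal.opow_ne_zero _ omega0_ne_zero
  have hne : x + omega0 ^ b ≠ 0 :=
    ((Ordinal.opow_pos b omega0_pos).trans_le (le_add_self (b := x))).ne'
  have key := add_opow_eq_mul x b
  have hge : b ≤ ell (x + omega0 ^ b) :=
    (opow_dvd_iff_le_ell hne b).1 ⟨_, key⟩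
  set E := ell (x + omega0 ^ b) with hE
  refine le_antisymm ?_ hge
  by_contra hlt
  push_neg at hlt
  obtain ⟨s, hs⟩ := (opow_dvd_iff_le_ell hne E).2 hE.ge
  have hsplit : omega0 ^ E = omega0 ^ b * omega0 ^ (E - b) := by
    rw [← Ordinal.opow_add, Ordinal.add_sub_cancel_of_le hlt.le]
  rw [key, hsplit, mul_assoc] at hs
  have hcancel : x / omega0 ^ b + 1 = omega0 ^ (E - b) * s :=
    (mul_right_inj' (Ordinal.opow_pos b omega0_pos).ne').1 hs
  have homega : omega0 ∣ x / omega0 ^ b + 1 := by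
    rw [hcancel]
    refine Dvd.dvd.mul_right ?_ s
    have h1 : (1 : Ordinal) ≤ E - b := by
      rw [Order.one_le_iff_pos, pos_iff_ne_zero]
      intro h0
      rw [Ordinal.sub_eq_zero_iff_le] at h0
      exact absurd hlt h0.not_gt
    simpa [Ordinal.opow_one] using Ordinal.opow_dvd_opow omega0 h1
  have hsucc : Order.IsSuccLimit (x / omega0 ^ b + 1) :=
    Ordinal.isSuccLimit_iff_omega0_dvd.2 ⟨by rw [Ordinal.add_one_eq_succ]; exact Order.succ_ne_bot _, homega⟩
  rw [Ordinal.add_one_eq_succ] at hsucc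
  exact Order.not_isSuccLimit_succ _ hsucc

lemma omega0_opow_eps0 : omega0 ^ eps0 = eps0 :=
  Ordinal.nfp_fp (Ordinal.isNormal_opow one_lt_omega0) 0

lemma opow_lt_eps0 {x : Ordinal} (hx : x < eps0) : omega0 ^ x < eps0 := by
  have := (Ordinal.opow_lt_opow_iff_right one_lt_omega0).2 hx
  rwa [omega0_opow_eps0] at this

lemma add_lt_eps0 {x y : Ordinal} (hx : x < eps0) (hy : y < eps0) : x + y < eps0 := by
  have h1 : x + eps0 = eps0 := by
    conv_lhs => rw [← omega0_opow_eps0]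
    rw [Ordinal.add_omega0_opow (by rwa [omega0_opow_eps0])]
    exact omega0_opow_eps0
  calc x + y < x + eps0 := add_lt_add_right hy x
    _ = eps0 := h1

/-- (1) If `ℓ(α) < β`, `α < γ` and `β ≤ ℓ(γ)` then `α + ω^β ≤ γ`.
(2) Consequently, the meet `δ` of `α, β ∈ I` satisfies
`δᵢ = max(αᵢ, βᵢ) + ω^{δ_{i+1}}` whenever `ℓ(max(αᵢ, βᵢ)) < δ_{i+1}`. -/
theorem stmt_16 :
    (∀ a b g : Ordinal, ell a < b → a < g → b ≤ ell g → a + omega0 ^ b ≤ g) ∧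
    (∀ a b d : ℕ → Ordinal, IgMem a → IgMem b →
      (IgMem d ∧ (∀ n, max (a n) (b n) ≤ d n) ∧
        ∀ c : ℕ → Ordinal, IgMem c → (∀ n, max (a n) (b n) ≤ c n) →
          ∀ n, d n ≤ c n) →
      ∀ i, ell (max (a i) (b i)) < d (i + 1) →
        d i = max (a i) (b i) + omega0 ^ d (i + 1)) := by
  constructor
  · intro a b g _ hag hb
    exact claim1 hag hb
  · rintro a b d ha hb ⟨hdI, hdub, hdmin⟩ i hlt
    have hMlt : max (a i) (b i) < d i := by
      rcases lt_or_eq_of_le (hdub i) with h | h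
      · exact h
      · exact absurd ((hdI.2 i).trans_lt (h ▸ hlt)) (lt_irrefl _)
    have hge : max (a i) (b i) + omega0 ^ d (i + 1) ≤ d i := claim1 hMlt (hdI.2 i)
    set c : ℕ → Ordinal :=
      fun n => if n = i then max (a i) (b i) + omega0 ^ d (i + 1) else d n with hc
    have hci : c i = max (a i) (b i) + omega0 ^ d (i + 1) := by simp [hc]
    have hcI : IgMem c := by
      constructor
      · intro n
        by_cases hn : n = i
        · rw [hn, hci]
          exact add_lt_eps0 (max_lt (ha.1 i) (hb.1 i)) (opow_lt_eps0 (hdI.1 (i + 1)))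
        · simpa [hc, hn] using hdI.1 n
      · intro n
        by_cases hn : n = i
        · subst hn
          have h1 : c (n + 1) = d (n + 1) := by simp [hc]
          have h2 : ell (c n) = d (n + 1) := by rw [hci]; exact ell_add_opow _ _
          rw [h1, h2]
        · by_cases hn1 : n + 1 = i
          · have h1 : c (n + 1) = max (a i) (b i) + omega0 ^ d (i + 1) := by
              simp [hc, hn1]
            have h2 : c n = d n := by simp [hc, hn]
            rw [h1, h2, ← hn1]
            rw [← hn1] at hge
            exact hge.trans (hdI.2 n)
          · have h1 : c (n + 1) = d (n + 1) := by simp [hc, hn1]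
            have h2 : c n = d n := by simp [hc, hn]
            rw [h1, h2]
            exact hdI.2 n
    have hcub : ∀ n, max (a n) (b n) ≤ c n := by
      intro n
      by_cases hn : n = i
      · rw [hn, hci]; exact le_self_add
      · simpa [hc, hn] using hdub n
    have hle := (hdmin c hcI hcub i).trans_eq hci
    exact le_antisymm hle hge
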